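/- Let θ₀ = (γ₀, μ₀, σ₀) with −1/2 < γ₀ < 0 and σ₀ > 0, and let θₙ = (γₙ, μₙ, σₙ) → θ₀ with γₙ < 0 for all n, and uₙ ↓ 0. Let ωₙ = μₙ − σₙ/γₙ be the (finite) upper endpoint of the support of the GEV law P_{θₙ}. Then P_{θₙ}([ωₙ − uₙ, ωₙ)) = 1 − exp(−(|γₙ| uₙ / σₙ)^{1/|γₙ|}) ≤ (|γₙ| uₙ / σₙ)^{1/|γₙ|}, and consequently uₙ^{−2} P_{θₙ}([ωₙ − uₙ, ωₙ)) → 0 as n → ∞. -/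

import Mathlib

open MeasureTheory Filter Set

/-- `u_γ(z)` for the GEV family: `(1 + γz)^(−1/γ)` for `γ ≠ 0` and `e^(−z)` for `γ = 0`. -/
noncomputable def gevU (γ z : ℝ) : ℝ :=
  if γ = 0 then Real.exp (-z) else (1 + γ * z) ^ (-γ⁻¹)

/-- Lebesgue density of the GEV distribution with parameter `θ = (γ, μ, σ)`. -/
noncomputable def gevDensity (θ : ℝ × ℝ × ℝ) (x : ℝ) : ℝ :=
  if 0 < θ.2.2 + θ.1 * (x - θ.2.1) then
    (θ.2.2)⁻¹ * Real.exp (-(gevU θ.1 ((x - θ.2.1) / θ.2.2))) *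
      gevU θ.1 ((x - θ.2.1) / θ.2.2) ^ (θ.1 + 1)
  else 0

/-- The GEV probability measure with parameter `θ`. -/
noncomputable def gevMeasure (θ : ℝ × ℝ × ℝ) : Measure ℝ :=
  MeasureTheory.volume.withDensity fun x => ENNReal.ofReal (gevDensity θ x)

lemma gev_mass (γ μ σ : ℝ) (hγ : γ < 0) (hσ : 0 < σ) (u : ℝ) (hu : 0 < u) :
    gevMeasure (γ, μ, σ) (Set.Ico (μ - σ/γ - u) (μ - σ/γ))
      = ENNReal.ofReal (1 - Real.exp (-((|γ| * u / σ) ^ (|γ|⁻¹)))) := by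
  have hγ0 : γ ≠ 0 := hγ.ne
  set p : ℝ := -γ⁻¹ with hp_def
  have hp : 0 < p := by
    rw [hp_def, neg_inv]
    exact inv_pos.mpr (neg_pos.mpr hγ)
  set b : ℝ := μ - σ/γ with hb_def
  set a : ℝ := μ - σ/γ - u with ha_def
  have hab : a < b := by rw [ha_def, hb_def]; linarith
  set s : ℝ → ℝ := fun x => 1 + γ * ((x - μ) / σ) with hs_def
  have hs_eq : ∀ x, s x = (γ/σ) * (x - b) := by
    intro x; rw [hs_def, hb_def]; field_simp; ring
  have hs_pos : ∀ x, x < b → 0 < s x := by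
    intro x hx
    rw [hs_eq]
    exact mul_pos_of_neg_of_neg (div_neg_of_neg_of_pos hγ hσ) (by linarith)
  have hsa : s a = -γ * u / σ := by
    rw [hs_eq, show a - b = -u from by rw [ha_def, hb_def]; ring]; ring
  have hsb : s b = 0 := by rw [hs_eq]; ring
  set G : ℝ → ℝ := fun x => Real.exp (-(s x ^ p)) with hG_def
  set d : ℝ → ℝ := gevDensity (γ, μ, σ) with hd_def
  have hd_eq : ∀ x, x < b → d x = σ⁻¹ * Real.exp (-(s x ^ p)) * s x ^ (p - 1) := by
    intro x hx
    have hsx := hs_pos x hx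
    have hcond : 0 < σ + γ * (x - μ) := by
      have h2 : 0 < σ * (1 + γ * ((x - μ)/σ)) := mul_pos hσ (by simpa [hs_def] using hsx)
      calc σ + γ * (x - μ) = σ * (1 + γ * ((x - μ)/σ)) := by field_simp
      _ > 0 := h2
    have hU : gevU γ ((x - μ) / σ) = s x ^ p := by
      rw [gevU, if_neg hγ0, hs_def, hp_def]
    rw [hd_def]
    show (if 0 < σ + γ * (x - μ) then
        σ⁻¹ * Real.exp (-(gevU γ ((x - μ) / σ))) * gevU γ ((x - μ) / σ) ^ (γ + 1)
      else 0) = _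
    rw [if_pos hcond, hU]
    congr 1
    rw [← Real.rpow_mul hsx.le]
    congr 1
    rw [hp_def]; field_simp; ring
  have hG_deriv : ∀ x ∈ Ioo a b, HasDerivAt G (d x) x := by
    intro x hx
    have hsx := hs_pos x hx.2
    have h1 : HasDerivAt s (γ/σ) x := by
      have : HasDerivAt (fun x : ℝ => 1 + γ * ((x - μ) / σ)) (γ * (1/σ)) x := by
        simpa using ((((hasDerivAt_id x).sub_const μ).div_const σ).const_mul γ).const_add 1
      rw [mul_one_div] at this; exact this
    have h2 : HasDerivAt (fun x => s x ^ p) (p * s x ^ (p - 1) * (γ/σ)) x :=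
      (Real.hasDerivAt_rpow_const (Or.inl hsx.ne')).comp x h1
    have h3 : HasDerivAt G (Real.exp (-(s x ^ p)) * -(p * s x ^ (p - 1) * (γ/σ))) x :=
      (Real.hasDerivAt_exp _).comp x h2.neg
    have heq : Real.exp (-(s x ^ p)) * -(p * s x ^ (p - 1) * (γ/σ)) = d x := by
      rw [hd_eq x hx.2, hp_def]
      field_simp
    rw [← heq]; exact h3
  have hd_nonneg : ∀ x : ℝ, 0 ≤ d x := by
    intro x
    rw [hd_def]
    show 0 ≤ (if 0 < σ + γ * (x - μ) then
        σ⁻¹ * Real.exp (-(gevU γ ((x - μ) / σ))) * gevU γ ((x - μ) / σ) ^ (γ + 1)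
      else 0)
    split
    · rename_i h
      have hbase : 0 ≤ 1 + γ * ((x - μ) / σ) := by
        have : 0 < (σ + γ * (x - μ)) / σ := div_pos h hσ
        calc (0:ℝ) ≤ (σ + γ * (x - μ)) / σ := this.le
        _ = 1 + γ * ((x - μ) / σ) := by field_simp
      have hU : 0 ≤ gevU γ ((x - μ) / σ) := by
        rw [gevU, if_neg hγ0]; exact Real.rpow_nonneg hbase _
      exact mul_nonneg (mul_nonneg (inv_nonneg.mpr hσ.le) (Real.exp_nonneg _))
        (Real.rpow_nonneg hU _)
    · exact le_rfl
  have hG_cont : ContinuousOn G (Icc a b) := by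
    apply Real.continuous_exp.comp_continuousOn
    apply ContinuousOn.neg
    apply ContinuousOn.rpow_const
    · exact (continuous_const.add (continuous_const.mul
        ((continuous_id.sub continuous_const).div_const σ))).continuousOn
    · intro x _; exact Or.inr hp.le
  have hint : IntegrableOn d (Ioc a b) volume :=
    intervalIntegral.integrableOn_deriv_of_nonneg hG_cont hG_deriv (fun x _ => hd_nonneg x)
  have hFTC : ∫ y in a..b, d y = G b - G a :=
    intervalIntegral.integral_eq_sub_of_hasDeriv_right_of_le hab.le hG_cont
      (fun x hx => (hG_deriv x hx).hasDerivWithinAt)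
      ((intervalIntegrable_iff_integrableOn_Ioc_of_le hab.le).mpr hint)
  have hGb : G b = 1 := by
    rw [hG_def]; simp [hsb, Real.zero_rpow hp.ne']
  have hGa : G a = Real.exp (-((|γ| * u / σ) ^ (|γ|⁻¹))) := by
    rw [hG_def]
    simp only [hsa, abs_of_neg hγ, hp_def]
    rw [← neg_inv]
  calc gevMeasure (γ, μ, σ) (Set.Ico a b)
      = ∫⁻ x in Set.Ico a b, ENNReal.ofReal (d x) := by
        rw [gevMeasure, withDensity_apply _ measurableSet_Ico]
    _ = ∫⁻ x in Set.Ioc a b, ENNReal.ofReal (d x) := by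
        rw [restrict_Ico_eq_restrict_Ioc]
    _ = ENNReal.ofReal (∫ x in Set.Ioc a b, d x) := by
        rw [← ofReal_integral_eq_lintegral_ofReal hint
          (ae_of_all _ fun x => hd_nonneg x)]
    _ = ENNReal.ofReal (G b - G a) := by
        rw [← hFTC, intervalIntegral.integral_of_le hab.le]
    _ = ENNReal.ofReal (1 - Real.exp (-((|γ| * u / σ) ^ (|γ|⁻¹)))) := by rw [hGb, hGa]

/-- For `−1/2 < γ₀ < 0`, parameters `θₙ = (γₙ, μₙ, σₙ) → θ₀` with `γₙ < 0`, `σₙ > 0`, and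
`uₙ ↓ 0`, the GEV mass of the interval `[ωₙ − uₙ, ωₙ)` below the upper endpoint
`ωₙ = μₙ − σₙ/γₙ` of the support equals `1 − exp(−(|γₙ| uₙ/σₙ)^{1/|γₙ|})`, is bounded by
`(|γₙ| uₙ/σₙ)^{1/|γₙ|}`, and is `o(uₙ²)` as `n → ∞`. -/
theorem gev_endpoint_mass (γ₀ μ₀ σ₀ : ℝ) (hγ₀ : -(1/2) < γ₀) (hγ₀' : γ₀ < 0) (hσ₀ : 0 < σ₀)
    (θseq : ℕ → ℝ × ℝ × ℝ)
    (hθlim : Filter.Tendsto θseq Filter.atTop (nhds (γ₀, μ₀, σ₀)))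
    (hγn : ∀ n, (θseq n).1 < 0) (hσn : ∀ n, 0 < (θseq n).2.2)
    (u : ℕ → ℝ) (hu_pos : ∀ n, 0 < u n) (hu_anti : Antitone u)
    (hu_lim : Filter.Tendsto u Filter.atTop (nhds 0)) :
    (∀ n : ℕ,
      gevMeasure (θseq n)
          (Set.Ico ((θseq n).2.1 - (θseq n).2.2 / (θseq n).1 - u n)
            ((θseq n).2.1 - (θseq n).2.2 / (θseq n).1))
        = ENNReal.ofReal
            (1 - Real.exp (-((|(θseq n).1| * u n / (θseq n).2.2) ^ (|(θseq n).1|⁻¹)))) ∧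
      gevMeasure (θseq n)
          (Set.Ico ((θseq n).2.1 - (θseq n).2.2 / (θseq n).1 - u n)
            ((θseq n).2.1 - (θseq n).2.2 / (θseq n).1))
        ≤ ENNReal.ofReal ((|(θseq n).1| * u n / (θseq n).2.2) ^ (|(θseq n).1|⁻¹))) ∧
    Filter.Tendsto
      (fun n : ℕ =>
        (gevMeasure (θseq n)
            (Set.Ico ((θseq n).2.1 - (θseq n).2.2 / (θseq n).1 - u n)
              ((θseq n).2.1 - (θseq n).2.2 / (θseq n).1))).toReal / (u n) ^ 2)
      Filter.atTop (nhds 0) := by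
  -- abbreviations
  set t : ℕ → ℝ := fun n => (|(θseq n).1| * u n / (θseq n).2.2) ^ (|(θseq n).1|⁻¹) with ht_def
  have ht_nonneg : ∀ n, 0 ≤ t n := fun n =>
    Real.rpow_nonneg (div_nonneg (mul_nonneg (abs_nonneg _) (hu_pos n).le) (hσn n).le) _
  have heq : ∀ n, gevMeasure (θseq n)
      (Set.Ico ((θseq n).2.1 - (θseq n).2.2 / (θseq n).1 - u n)
        ((θseq n).2.1 - (θseq n).2.2 / (θseq n).1))
      = ENNReal.ofReal (1 - Real.exp (-(t n))) := fun n =>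
    gev_mass (θseq n).1 (θseq n).2.1 (θseq n).2.2 (hγn n) (hσn n) (u n) (hu_pos n)
  have hsub : ∀ n, 1 - Real.exp (-(t n)) ≤ t n := by
    intro n
    have := Real.add_one_le_exp (-(t n))
    linarith
  have hle : ∀ n, gevMeasure (θseq n)
      (Set.Ico ((θseq n).2.1 - (θseq n).2.2 / (θseq n).1 - u n)
        ((θseq n).2.1 - (θseq n).2.2 / (θseq n).1))
      ≤ ENNReal.ofReal (t n) := by
    intro n
    rw [heq n]
    exact ENNReal.ofReal_le_ofReal (hsub n)
  refine ⟨fun n => ⟨heq n, hle n⟩, ?_⟩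
  -- limits of the parameter components
  have hγlim : Tendsto (fun n => (θseq n).1) atTop (nhds γ₀) :=
    (continuous_fst.tendsto _).comp hθlim
  have hσlim : Tendsto (fun n => (θseq n).2.2) atTop (nhds σ₀) :=
    ((continuous_snd.comp continuous_snd).tendsto _).comp hθlim
  have habsγ : Tendsto (fun n => |(θseq n).1|) atTop (nhds |γ₀|) := hγlim.abs
  have hγ₀abs : 0 < |γ₀| := abs_pos.mpr hγ₀'.ne
  have hqlim : Tendsto (fun n => |(θseq n).1|⁻¹) atTop (nhds (|γ₀|⁻¹)) :=
    habsγ.inv₀ hγ₀abs.ne'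
  have hclim : Tendsto (fun n => |(θseq n).1| / (θseq n).2.2) atTop (nhds (|γ₀| / σ₀)) :=
    habsγ.div hσlim hσ₀.ne'
  have hq2 : 0 < |γ₀|⁻¹ - 2 := by
    have h1 : 0 < -γ₀ := by linarith
    have h2 : -γ₀ < 1/2 := by linarith
    have key : (-γ₀) * (-γ₀)⁻¹ = 1 := mul_inv_cancel₀ h1.ne'
    rw [abs_of_neg hγ₀']
    nlinarith [inv_pos.mpr h1]
  -- tₙ / uₙ² → 0
  have hg : Tendsto (fun n => t n / (u n) ^ 2) atTop (nhds 0) := by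
    have hrw : ∀ n, t n / (u n) ^ 2
        = (|(θseq n).1| / (θseq n).2.2) ^ (|(θseq n).1|⁻¹) * (u n) ^ (|(θseq n).1|⁻¹ - 2) := by
      intro n
      show (|(θseq n).1| * u n / (θseq n).2.2) ^ (|(θseq n).1|⁻¹) / (u n) ^ 2 = _
      have h1 : |(θseq n).1| * u n / (θseq n).2.2 = (|(θseq n).1| / (θseq n).2.2) * u n := by
        ring
      rw [h1, Real.mul_rpow (div_nonneg (abs_nonneg _) (hσn n).le) (hu_pos n).le,
        Real.rpow_sub (hu_pos n), mul_div_assoc]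
      norm_num [Real.rpow_two]
    have h1 : Tendsto (fun n => (|(θseq n).1| / (θseq n).2.2) ^ (|(θseq n).1|⁻¹)) atTop
        (nhds ((|γ₀| / σ₀) ^ (|γ₀|⁻¹))) :=
      hclim.rpow hqlim (Or.inl (div_pos hγ₀abs hσ₀).ne')
    have h2 : Tendsto (fun n => (u n) ^ (|(θseq n).1|⁻¹ - 2)) atTop (nhds 0) := by
      have := hu_lim.rpow (hqlim.sub tendsto_const_nhds) (Or.inr hq2)
      simpa [Real.zero_rpow hq2.ne'] using this
    have := h1.mul h2
    rw [mul_zero] at this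
    simp only [hrw]
    exact this
  -- squeeze
  apply squeeze_zero (fun n => div_nonneg ENNReal.toReal_nonneg (sq_nonneg _)) _ hg
  intro n
  have : (gevMeasure (θseq n)
      (Set.Ico ((θseq n).2.1 - (θseq n).2.2 / (θseq n).1 - u n)
        ((θseq n).2.1 - (θseq n).2.2 / (θseq n).1))).toReal ≤ t n :=
    ENNReal.toReal_le_of_le_ofReal (ht_nonneg n) (hle n)
  gcongr
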